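/- For real parameters γ, δ and β ∈ ℝ, define the 2×2 real matrix M(β) := [[δβ², δ(1-β²)], [γδβ², 1-γ(1-δ(1-β²))]]. If |δ| < 1 and 0 < γ < 1, then there exists c ∈ (0,1) such that for every β ∈ [-1,1], every complex eigenvalue μ of M(β) (i.e., every element of the spectrum of M(β) viewed as a complex matrix) satisfies |μ| ≤ c. -/

import Mathlib

open Matrix

/-- Upper-left 2×2 block of the companion matrix of the VAR(1) representation. -/
noncomputable def Mmat (γ δ β : ℝ) : Matrix (Fin 2) (Fin 2) ℝ :=
  !![δ * β ^ 2, δ * (1 - β ^ 2);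
     γ * δ * β ^ 2, 1 - γ * (1 - δ * (1 - β ^ 2))]

/-- Characteristic equation for eigenvalues of `Mmat`. -/
lemma Mmat_char_eq (γ δ β : ℝ) (μ : ℂ)
    (hμ : μ ∈ spectrum ℂ ((Mmat γ δ β).map (fun x : ℝ => (x : ℂ)))) :
    μ ^ 2 - ((δ * β ^ 2 * (1 - γ) + 1 - γ + γ * δ : ℝ) : ℂ) * μ
      + ((δ * β ^ 2 * (1 - γ) : ℝ) : ℂ) = 0 := by
  have h := spectrum.mem_iff.mp hμ
  rw [Matrix.isUnit_iff_isUnit_det, isUnit_iff_ne_zero, not_not] at h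
  simp [Matrix.det_fin_two, Mmat, Matrix.algebraMap_matrix_apply, Matrix.sub_apply,
    Matrix.map_apply] at h
  push_cast
  linear_combination h

/-- Roots of a real monic quadratic with controlled coefficients are bounded. -/
lemma quad_root_bound (T D ε₁ ε₂ d : ℝ) (μ : ℂ)
    (hkey : μ ^ 2 - (T : ℂ) * μ + (D : ℂ) = 0)
    (hDle : D ≤ d) (hDge : -d ≤ D) (hd1 : d < 1)
    (hε₁pos : 0 < ε₁) (hε₂pos : 0 < ε₂)
    (h1 : 1 - T + D = ε₁) (h2 : ε₂ ≤ 1 + T + D) :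
    ‖μ‖ ≤ max (Real.sqrt d) (1 - min ε₁ ε₂ / 2) := by
  by_cases hre : (starRingEnd ℂ) μ = μ
  · -- real root
    have hμx : μ = ((μ.re : ℝ) : ℂ) := (Complex.conj_eq_iff_re.mp hre).symm
    set x : ℝ := μ.re
    have hx : x ^ 2 - T * x + D = 0 := by
      have : ((x ^ 2 - T * x + D : ℝ) : ℂ) = 0 := by push_cast; rw [← hμx]; exact hkey
      exact_mod_cast this
    set ν : ℝ := T - x with hνd
    have hprod : x * ν = D := by rw [hνd]; linear_combination -hx
    have hP1 : (1 - x) * (1 - ν) = ε₁ := by rw [← h1]; linear_combination hprod - hνd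
    have hP2 : ε₂ ≤ (1 + x) * (1 + ν) := by
      have : (1 + x) * (1 + ν) = 1 + T + D := by rw [← hprod, hνd]; ring
      linarith
    have hx1 : x < 1 ∧ ν < 1 := by
      rcases (mul_pos_iff.mp (by rw [hP1]; exact hε₁pos)) with ⟨ha, hb⟩ | ⟨ha, hb⟩
      · constructor <;> linarith
      · exfalso; nlinarith
    have hx2 : -1 < x ∧ -1 < ν := by
      rcases (mul_pos_iff.mp (lt_of_lt_of_le hε₂pos hP2)) with ⟨ha, hb⟩ | ⟨ha, hb⟩
      · constructor <;> linarith
      · exfalso; nlinarith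
    have hA : ε₁ ≤ (1 - x) * 2 := by nlinarith [hx1.2, hx2.2]
    have hB : ε₂ ≤ (1 + x) * 2 := by nlinarith [hx1.2, hx2.2]
    have hxm : |x| ≤ 1 - min ε₁ ε₂ / 2 := by
      rw [abs_le]
      refine ⟨?_, ?_⟩
      · have : min ε₁ ε₂ ≤ ε₂ := min_le_right _ _
        linarith
      · have : min ε₁ ε₂ ≤ ε₁ := min_le_left _ _
        linarith
    calc ‖μ‖ = |x| := by rw [hμx]; exact (Complex.norm_real x).trans (Real.norm_eq_abs x)
      _ ≤ 1 - min ε₁ ε₂ / 2 := hxm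
      _ ≤ _ := le_max_right _ _
  · -- nonreal root: |μ|² = D
    have hkey' : (starRingEnd ℂ) μ ^ 2 - (T : ℂ) * (starRingEnd ℂ) μ + (D : ℂ) = 0 := by
      have := congrArg (starRingEnd ℂ) hkey
      simpa using this
    have hsum : μ + (starRingEnd ℂ) μ = (T : ℂ) := by
      have hne : μ - (starRingEnd ℂ) μ ≠ 0 := sub_ne_zero.mpr (fun h => hre h.symm)
      have hmul : (μ - (starRingEnd ℂ) μ) * (μ + (starRingEnd ℂ) μ - (T : ℂ)) = 0 := by
        linear_combination hkey - hkey'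
      rcases mul_eq_zero.mp hmul with h | h
      · exact absurd h hne
      · linear_combination h
    have hnsq : ((Complex.normSq μ : ℝ) : ℂ) = (D : ℂ) := by
      rw [Complex.normSq_eq_conj_mul_self]
      push_cast
      linear_combination (μ : ℂ) * hsum - hkey
    have hnsq' : Complex.normSq μ = D := by exact_mod_cast hnsq
    have : ‖μ‖ ≤ Real.sqrt d := by
      rw [Complex.norm_def, hnsq']
      exact Real.sqrt_le_sqrt hDle
    exact le_trans this (le_max_left _ _)

/-- If `|δ| < 1` and `0 < γ < 1`, there is `c ∈ (0,1)` with: for every `β ∈ [-1,1]`,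
every complex eigenvalue `μ` of `M(β)` (element of the spectrum of `M(β)` viewed as a
complex matrix) satisfies `|μ| ≤ c`. -/
theorem spectral_radius_uniformly_below_one (γ δ : ℝ)
    (hδ : |δ| < 1) (hγ0 : 0 < γ) (hγ1 : γ < 1) :
    ∃ c ∈ Set.Ioo (0 : ℝ) 1, ∀ β ∈ Set.Icc (-1 : ℝ) 1,
      ∀ μ ∈ spectrum ℂ ((Mmat γ δ β).map (fun x : ℝ => (x : ℂ))),
        ‖μ‖ ≤ c := by
  obtain ⟨hδl, hδu⟩ := abs_lt.mp hδ
  have habs0 : (0:ℝ) ≤ |δ| := abs_nonneg δ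
  have hle : δ ≤ |δ| := le_abs_self δ
  have hge : -|δ| ≤ δ := neg_abs_le δ
  have hd0 : (0:ℝ) ≤ |δ| * (1 - γ) := by nlinarith
  have hd1 : |δ| * (1 - γ) < 1 := by nlinarith
  have hε₁pos : 0 < γ * (1 - δ) := by nlinarith
  have hε₁lt2 : γ * (1 - δ) < 2 := by nlinarith
  have hε₂pos : (0:ℝ) < min (2 - γ * (1 - δ)) ((1 + δ) * (2 - γ)) :=
    lt_min (by nlinarith) (by nlinarith)
  have hmpos : (0:ℝ) < min (γ * (1 - δ)) (min (2 - γ * (1 - δ)) ((1 + δ) * (2 - γ))) :=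
    lt_min hε₁pos hε₂pos
  have hmlt2 : min (γ * (1 - δ)) (min (2 - γ * (1 - δ)) ((1 + δ) * (2 - γ))) < 2 :=
    lt_of_le_of_lt (min_le_left _ _) hε₁lt2
  refine ⟨max (Real.sqrt (|δ| * (1 - γ)))
      (1 - min (γ * (1 - δ)) (min (2 - γ * (1 - δ)) ((1 + δ) * (2 - γ))) / 2), ⟨?_, ?_⟩, ?_⟩
  · exact lt_max_of_lt_right (by linarith)
  · refine max_lt ?_ (by linarith)
    simpa using Real.sqrt_lt_sqrt hd0 hd1
  intro β hβ μ hμ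
  obtain ⟨hβl, hβu⟩ := hβ
  have hb0 : 0 ≤ β ^ 2 := sq_nonneg β
  have hb1 : β ^ 2 ≤ 1 := by nlinarith
  have hkey := Mmat_char_eq γ δ β μ hμ
  have hDle : δ * β ^ 2 * (1 - γ) ≤ |δ| * (1 - γ) := by
    have h1 : δ * β ^ 2 ≤ |δ| * β ^ 2 := mul_le_mul_of_nonneg_right hle hb0
    have h2 : |δ| * β ^ 2 ≤ |δ| := mul_le_of_le_one_right habs0 hb1
    nlinarith
  have hDge : -(|δ| * (1 - γ)) ≤ δ * β ^ 2 * (1 - γ) := by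
    have h1 : -|δ| * β ^ 2 ≤ δ * β ^ 2 := mul_le_mul_of_nonneg_right hge hb0
    have h2 : -|δ| ≤ -|δ| * β ^ 2 := by nlinarith
    nlinarith
  have h1 : 1 - (δ * β ^ 2 * (1 - γ) + 1 - γ + γ * δ) + δ * β ^ 2 * (1 - γ) = γ * (1 - δ) := by
    ring
  have h2 : min (2 - γ * (1 - δ)) ((1 + δ) * (2 - γ)) ≤
      1 + (δ * β ^ 2 * (1 - γ) + 1 - γ + γ * δ) + δ * β ^ 2 * (1 - γ) := by
    have e1 : min (2 - γ * (1 - δ)) ((1 + δ) * (2 - γ)) ≤ 2 - γ * (1 - δ) := min_le_left _ _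
    have e2 : min (2 - γ * (1 - δ)) ((1 + δ) * (2 - γ)) ≤ (1 + δ) * (2 - γ) := min_le_right _ _
    have he : 1 + (δ * β ^ 2 * (1 - γ) + 1 - γ + γ * δ) + δ * β ^ 2 * (1 - γ)
        = (1 - β ^ 2) * (2 - γ * (1 - δ)) + β ^ 2 * ((1 + δ) * (2 - γ)) := by ring
    have ha := mul_le_mul_of_nonneg_left e1 (show (0:ℝ) ≤ 1 - β ^ 2 by linarith)
    have hb' := mul_le_mul_of_nonneg_left e2 hb0
    have hid : min (2 - γ * (1 - δ)) ((1 + δ) * (2 - γ)) =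
        (1 - β ^ 2) * min (2 - γ * (1 - δ)) ((1 + δ) * (2 - γ))
        + β ^ 2 * min (2 - γ * (1 - δ)) ((1 + δ) * (2 - γ)) := by ring
    linarith
  exact quad_root_bound _ _ _ _ _ μ hkey hDle hDge hd1 hε₁pos hε₂pos h1 h2
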